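/- Let N ≥ 3 be an odd integer, 1 ≤ j ≤ (N−1)/2 an integer, a, t real numbers, s ∈ {0, 1, 2}, and γ₁, γ₂, γ₃ real numbers with γ₁ ≠ 0. For each integer r ≥ 1 define h_j(r) = γ₁ + Σ_{m=1}^{∞} (−1)^{m·s}·(γ₂·(−1)^{1+r}·(j/(mN−j))^{1+r} + γ₃·(j/(mN+j))^{1+r}) and c_j(r,t) = γ₁·cos(j(t−a)) + Σ_{m=1}^{∞} (−1)^{m·s}·(γ₂·(−1)^{1+r}·(j/(mN−j))^{1+r}·cos((mN−j)(t−a)) + γ₃·(j/(mN+j))^{1+r}·cos((mN+j)(t−a))). Then lim_{r→∞} c_j(r,t)/h_j(r) = cos(j(t−a)). -/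

import Mathlib

open Real Filter

/-- As the degree `r → ∞`, the normalized terms `c_j(r,t)/h_j(r)` of the fundamental
trigonometric spline converge to `cos(j(t-a))`, i.e. the splines converge to the
interpolating trigonometric polynomial. -/
theorem normalized_term_tendsto_cos
    (N j : ℕ) (hN : 3 ≤ N) (hNodd : Odd N) (hj1 : 1 ≤ j) (hj2 : j ≤ (N - 1) / 2)
    (a t : ℝ) (s : ℕ) (hs : s = 0 ∨ s = 1 ∨ s = 2)
    (γ₁ γ₂ γ₃ : ℝ) (hγ₁ : γ₁ ≠ 0)
    (h : ℕ → ℝ)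
    (hh : ∀ r : ℕ, h r =
      γ₁ + ∑' m : ℕ, (-1 : ℝ) ^ ((m + 1) * s) *
        (γ₂ * (-1 : ℝ) ^ (1 + r) * ((j : ℝ) / (((m : ℝ) + 1) * N - j)) ^ (1 + r) +
          γ₃ * ((j : ℝ) / (((m : ℝ) + 1) * N + j)) ^ (1 + r)))
    (c : ℕ → ℝ)
    (hc : ∀ r : ℕ, c r =
      γ₁ * Real.cos (j * (t - a)) +
        ∑' m : ℕ, (-1 : ℝ) ^ ((m + 1) * s) *
          (γ₂ * (-1 : ℝ) ^ (1 + r) * ((j : ℝ) / (((m : ℝ) + 1) * N - j)) ^ (1 + r) *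
              Real.cos ((((m : ℝ) + 1) * N - j) * (t - a)) +
            γ₃ * ((j : ℝ) / (((m : ℝ) + 1) * N + j)) ^ (1 + r) *
              Real.cos ((((m : ℝ) + 1) * N + j) * (t - a)))) :
    Tendsto (fun r : ℕ => c r / h r) atTop (nhds (Real.cos (j * (t - a)))) := by
  -- Notation for the two ratios
  set A : ℕ → ℝ := fun m => (j : ℝ) / (((m : ℝ) + 1) * N - j) with hA
  set B : ℕ → ℝ := fun m => (j : ℝ) / (((m : ℝ) + 1) * N + j) with hB
  -- Basic numeric facts
  have hjN : 2 * j < N := by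
    rcases hNodd with ⟨k, hk⟩; omega
  have hjR : (1 : ℝ) ≤ (j : ℝ) := by exact_mod_cast hj1
  have hNR : (3 : ℝ) ≤ (N : ℝ) := by exact_mod_cast hN
  have h2j : 2 * (j : ℝ) < (N : ℝ) := by exact_mod_cast hjN
  have hm0 : ∀ m : ℕ, (0 : ℝ) ≤ (m : ℝ) := fun m => Nat.cast_nonneg m
  have hd : ∀ m : ℕ, (j : ℝ) < ((m : ℝ) + 1) * N - j := by
    intro m
    have h1 : (N : ℝ) ≤ ((m : ℝ) + 1) * N := by nlinarith [hm0 m]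
    linarith
  have hdpos : ∀ m : ℕ, (0 : ℝ) < ((m : ℝ) + 1) * N - j := fun m => lt_trans (by linarith) (hd m)
  have hA0 : ∀ m, 0 ≤ A m := fun m => le_of_lt (div_pos (by linarith) (hdpos m))
  have hA1 : ∀ m, A m < 1 := fun m => (div_lt_one (hdpos m)).mpr (hd m)
  have hB0 : ∀ m, 0 ≤ B m := fun m =>
    le_of_lt (div_pos (by linarith) (by nlinarith [hm0 m]))
  have hBA : ∀ m, B m ≤ A m := by
    intro m
    apply div_le_div_of_nonneg_left (by linarith) (hdpos m)
    linarith
  have hB1 : ∀ m, B m < 1 := fun m => lt_of_le_of_lt (hBA m) (hA1 m)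
  have hAle : ∀ m, A m ≤ (j : ℝ) / ((m : ℝ) + 1) := by
    intro m
    apply div_le_div_of_nonneg_left (by linarith) (by linarith [hm0 m])
    have : (0 : ℝ) ≤ (m : ℝ) * ((N : ℝ) - 1) :=
      mul_nonneg (hm0 m) (by linarith)
    nlinarith
  -- The dominating summable bound
  have hsum0 : Summable (fun m : ℕ => (1 : ℝ) / ((m : ℝ) + 1) ^ 2) := by
    have := (summable_nat_add_iff (f := fun n : ℕ => (1 : ℝ) / (n : ℝ) ^ 2) 1).mpr
      (summable_one_div_nat_pow.mpr one_lt_two)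
    simpa [Nat.cast_add] using this
  have hsum : Summable (fun m : ℕ => (|γ₂| + |γ₃|) * ((j : ℝ) / ((m : ℝ) + 1)) ^ 2) := by
    have h1 : Summable (fun m : ℕ => ((j : ℝ) / ((m : ℝ) + 1)) ^ 2) := by
      have := hsum0.mul_left ((j : ℝ) ^ 2)
      apply this.congr
      intro m
      rw [div_pow]
      ring
    exact h1.mul_left _
  -- Key: any family of summands bounded by |γ₂| A^(1+r) + |γ₃| B^(1+r) has tsum → 0
  have key : ∀ u : ℕ → ℕ → ℝ,
      (∀ r m, |u r m| ≤ |γ₂| * A m ^ (1 + r) + |γ₃| * B m ^ (1 + r)) →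
      Tendsto (fun r => ∑' m, u r m) atTop (nhds 0) := by
    intro u hu
    have hlim : Tendsto (fun r => ∑' m, u r m) atTop (nhds (∑' _ : ℕ, (0 : ℝ))) := by
      apply tendsto_tsum_of_dominated_convergence hsum
      · intro m
        apply squeeze_zero_norm (fun r => hu r m)
        have hAz : Tendsto (fun r : ℕ => A m ^ (1 + r)) atTop (nhds 0) := by
          have h1 : Tendsto (fun r : ℕ => A m ^ r) atTop (nhds 0) :=
            tendsto_pow_atTop_nhds_zero_of_lt_one (hA0 m) (hA1 m)
          have : (fun r : ℕ => A m ^ (1 + r)) = fun r : ℕ => A m * A m ^ r := by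
            funext r; rw [pow_add, pow_one]
          rw [this]
          simpa using h1.const_mul (A m)
        have hBz : Tendsto (fun r : ℕ => B m ^ (1 + r)) atTop (nhds 0) := by
          have h1 : Tendsto (fun r : ℕ => B m ^ r) atTop (nhds 0) :=
            tendsto_pow_atTop_nhds_zero_of_lt_one (hB0 m) (hB1 m)
          have : (fun r : ℕ => B m ^ (1 + r)) = fun r : ℕ => B m * B m ^ r := by
            funext r; rw [pow_add, pow_one]
          rw [this]
          simpa using h1.const_mul (B m)
        have := (hAz.const_mul |γ₂|).add (hBz.const_mul |γ₃|)
        simpa using this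
      · filter_upwards [eventually_ge_atTop 1] with r hr
        intro m
        have hpowA : A m ^ (1 + r) ≤ A m ^ 2 :=
          pow_le_pow_of_le_one (hA0 m) (le_of_lt (hA1 m)) (by omega)
        have hpowB : B m ^ (1 + r) ≤ B m ^ 2 :=
          pow_le_pow_of_le_one (hB0 m) (le_of_lt (hB1 m)) (by omega)
        have hA2 : A m ^ 2 ≤ ((j : ℝ) / ((m : ℝ) + 1)) ^ 2 :=
          pow_le_pow_left₀ (hA0 m) (hAle m) 2
        have hB2 : B m ^ 2 ≤ ((j : ℝ) / ((m : ℝ) + 1)) ^ 2 :=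
          le_trans (pow_le_pow_left₀ (hB0 m) (hBA m) 2) hA2
        calc ‖u r m‖ = |u r m| := rfl
          _ ≤ |γ₂| * A m ^ (1 + r) + |γ₃| * B m ^ (1 + r) := hu r m
          _ ≤ (|γ₂| + |γ₃|) * ((j : ℝ) / ((m : ℝ) + 1)) ^ 2 := by
              nlinarith [abs_nonneg γ₂, abs_nonneg γ₃, le_trans hpowA hA2, le_trans hpowB hB2,
                pow_nonneg (hA0 m) (1 + r), pow_nonneg (hB0 m) (1 + r)]
    simpa using hlim
  -- Apply to the tail of h
  have hS : Tendsto (fun r => ∑' m : ℕ, (-1 : ℝ) ^ ((m + 1) * s) *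
      (γ₂ * (-1 : ℝ) ^ (1 + r) * A m ^ (1 + r) + γ₃ * B m ^ (1 + r)))
      atTop (nhds 0) := by
    apply key
    intro r m
    rw [abs_mul, abs_pow, abs_neg, abs_one, one_pow, one_mul]
    calc |γ₂ * (-1 : ℝ) ^ (1 + r) * A m ^ (1 + r) + γ₃ * B m ^ (1 + r)|
        ≤ |γ₂ * (-1 : ℝ) ^ (1 + r) * A m ^ (1 + r)| + |γ₃ * B m ^ (1 + r)| := abs_add_le _ _
      _ ≤ |γ₂| * A m ^ (1 + r) + |γ₃| * B m ^ (1 + r) := by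
          rw [abs_mul, abs_mul, abs_mul, abs_pow, abs_pow, abs_pow, abs_neg, abs_one,
            one_pow, mul_one, abs_of_nonneg (hA0 m), abs_of_nonneg (hB0 m)]
  -- Apply to the tail of c
  have hT : Tendsto (fun r => ∑' m : ℕ, (-1 : ℝ) ^ ((m + 1) * s) *
      (γ₂ * (-1 : ℝ) ^ (1 + r) * A m ^ (1 + r) * Real.cos ((((m : ℝ) + 1) * N - j) * (t - a)) +
        γ₃ * B m ^ (1 + r) * Real.cos ((((m : ℝ) + 1) * N + j) * (t - a))))
      atTop (nhds 0) := by
    apply key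
    intro r m
    rw [abs_mul, abs_pow, abs_neg, abs_one, one_pow, one_mul]
    calc |γ₂ * (-1 : ℝ) ^ (1 + r) * A m ^ (1 + r) * Real.cos ((((m : ℝ) + 1) * N - j) * (t - a)) +
          γ₃ * B m ^ (1 + r) * Real.cos ((((m : ℝ) + 1) * N + j) * (t - a))|
        ≤ |γ₂ * (-1 : ℝ) ^ (1 + r) * A m ^ (1 + r) * Real.cos ((((m : ℝ) + 1) * N - j) * (t - a))| +
          |γ₃ * B m ^ (1 + r) * Real.cos ((((m : ℝ) + 1) * N + j) * (t - a))| := abs_add_le _ _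
      _ ≤ |γ₂| * A m ^ (1 + r) + |γ₃| * B m ^ (1 + r) := by
          have c1 := Real.abs_cos_le_one ((((m : ℝ) + 1) * N - j) * (t - a))
          have c2 := Real.abs_cos_le_one ((((m : ℝ) + 1) * N + j) * (t - a))
          rw [abs_mul, abs_mul, abs_mul, abs_mul, abs_mul, abs_pow, abs_pow, abs_pow,
            abs_neg, abs_one, one_pow, mul_one, abs_of_nonneg (hA0 m), abs_of_nonneg (hB0 m)]
          have h1 : 0 ≤ |γ₂| * A m ^ (1 + r) :=
            mul_nonneg (abs_nonneg _) (pow_nonneg (hA0 m) _)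
          have h2 : 0 ≤ |γ₃| * B m ^ (1 + r) :=
            mul_nonneg (abs_nonneg _) (pow_nonneg (hB0 m) _)
          nlinarith [abs_nonneg (Real.cos ((((m : ℝ) + 1) * N - j) * (t - a))),
            abs_nonneg (Real.cos ((((m : ℝ) + 1) * N + j) * (t - a)))]
  -- Combine
  have hhdiv : Tendsto (fun r : ℕ => c r / h r) atTop
      (nhds ((γ₁ * Real.cos (j * (t - a)) + 0) / (γ₁ + 0))) := by
    have hcT : Tendsto c atTop (nhds (γ₁ * Real.cos (j * (t - a)) + 0)) := by
      have := (tendsto_const_nhds (x := γ₁ * Real.cos (j * (t - a))) (f := atTop)).add hT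
      apply this.congr
      intro r
      rw [hc r]
    have hhT : Tendsto h atTop (nhds (γ₁ + 0)) := by
      have := (tendsto_const_nhds (x := γ₁) (f := atTop)).add hS
      apply this.congr
      intro r
      rw [hh r]
    exact hcT.div hhT (by simpa using hγ₁)
  have : (γ₁ * Real.cos (j * (t - a)) + 0) / (γ₁ + 0) = Real.cos (j * (t - a)) := by
    rw [add_zero, add_zero, mul_div_cancel_left₀ _ hγ₁]
  rwa [this] at hhdiv
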